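/- (Abel-transformation estimate, inequality (5)) Let 1 ≤ p < ∞ be real, let n < N be positive integers, and let a_1, …, a_N be nonnegative reals. Set A_ν = ∑_{k=1}^{ν} (k a_k)^p for 1 ≤ ν ≤ N. Then (1/(n+1)^p) ∑_{ν=1}^{n} (ν a_ν)^p + ∑_{ν=n+1}^{N} a_ν^p ≤ p ∑_{ν=n}^{N} ν^{−(p+1)} A_ν + N^{−p} A_N. -/

import Mathlib

open Real Finset

private lemma key_ineq {p : ℝ} (hp : 1 ≤ p) {x : ℝ} (hx : 1 ≤ x) :
    x ^ (-p) - (x + 1) ^ (-p) ≤ p * x ^ (-(p + 1)) := by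
  have hx0 : (0:ℝ) < x := lt_of_lt_of_le one_pos hx
  set t : ℝ := 1 / x with ht
  have ht0 : 0 < t := by positivity
  have ht1 : 0 < 1 + t := by linarith
  -- Bernoulli with s = -t/(1+t)
  have hs : (-1:ℝ) ≤ -t / (1 + t) := by
    rw [neg_div, neg_le_neg_iff, div_le_one ht1]; linarith
  have hb := one_add_mul_self_le_rpow_one_add hs hp
  have h1s : 1 + -t / (1 + t) = (1 + t)⁻¹ := by field_simp; ring
  rw [h1s] at hb
  have hinv : ((1 + t)⁻¹) ^ p = (1 + t) ^ (-p) := by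
    rw [Real.inv_rpow ht1.le, ← Real.rpow_neg ht1.le]
  rw [hinv] at hb
  -- so 1 - p * t ≤ (1+t)^(-p)
  have hb2 : 1 - p * t ≤ (1 + t) ^ (-p) := by
    refine le_trans ?_ hb
    have h4 : t / (1 + t) ≤ t := by
      rw [div_le_iff₀ ht1]; nlinarith
    have hp0 : (0:ℝ) ≤ p := by linarith
    have h5 : p * (t / (1 + t)) ≤ p * t := mul_le_mul_of_nonneg_left h4 hp0
    have h6 : 1 + p * (-t / (1 + t)) = 1 - p * (t / (1 + t)) := by ring
    linarith
  -- multiply by x^(-p)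
  have hxp : (0:ℝ) < x ^ (-p) := Real.rpow_pos_of_pos hx0 _
  have hmul := mul_le_mul_of_nonneg_left hb2 hxp.le
  have hprod : x ^ (-p) * (1 + t) ^ (-p) = (x + 1) ^ (-p) := by
    rw [← Real.mul_rpow hx0.le ht1.le]
    congr 1
    rw [ht]
    field_simp
  have hxp1 : x ^ (-p) * t = x ^ (-(p + 1)) := by
    rw [ht, one_div, ← Real.rpow_neg_one x, ← Real.rpow_add hx0]
    congr 1; ring
  rw [hprod] at hmul
  nlinarith [hmul, hxp1]

theorem stmt_17 {p : ℝ} (hp : 1 ≤ p) (n N : ℕ) (hn : 1 ≤ n) (hnN : n < N)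
    (a : ℕ → ℝ) (ha : ∀ k, 0 ≤ a k) :
    (1 / ((n : ℝ) + 1) ^ p) * ∑ ν ∈ Finset.Icc 1 n, ((ν : ℝ) * a ν) ^ p
      + ∑ ν ∈ Finset.Icc (n + 1) N, (a ν) ^ p
    ≤ p * ∑ ν ∈ Finset.Icc n N,
        ((ν : ℝ) ^ (-(p + 1))) * ∑ k ∈ Finset.Icc 1 ν, ((k : ℝ) * a k) ^ p
      + ((N : ℝ) ^ (-p)) * ∑ k ∈ Finset.Icc 1 N, ((k : ℝ) * a k) ^ p := by
  have hp0 : (0:ℝ) < p := lt_of_lt_of_le one_pos hp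
  set A : ℕ → ℝ := fun ν => ∑ k ∈ Finset.Icc 1 ν, ((k : ℝ) * a k) ^ p with hA
  have hApos : ∀ ν, 0 ≤ A ν := fun ν =>
    Finset.sum_nonneg fun k _ => Real.rpow_nonneg (mul_nonneg (Nat.cast_nonneg k) (ha k)) _
  -- main induction claim
  have main : ∀ M, n ≤ M →
      (1 / ((n : ℝ) + 1) ^ p) * A n + ∑ ν ∈ Finset.Icc (n + 1) M, (a ν) ^ p
        ≤ p * ∑ ν ∈ Finset.Ico n M, ((ν : ℝ) ^ (-(p + 1))) * A ν
          + ((M : ℝ) ^ (-p)) * A M := by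
    intro M hM
    induction M, hM using Nat.le_induction with
    | base =>
        rw [Finset.Icc_eq_empty (by omega), Finset.Ico_self, Finset.sum_empty,
          Finset.sum_empty]
        have hn0 : (0:ℝ) < (n:ℝ) := by exact_mod_cast hn
        have h1 : 1 / ((n:ℝ) + 1) ^ p = ((n:ℝ) + 1) ^ (-p) := by
          rw [Real.rpow_neg (by positivity), one_div]
        have h2 : ((n:ℝ) + 1) ^ (-p) ≤ (n:ℝ) ^ (-p) := by
          apply Real.rpow_le_rpow_of_nonpos hn0 (by linarith) (by linarith)
        rw [h1]
        simp only [mul_zero, add_zero, zero_add]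
        exact mul_le_mul_of_nonneg_right h2 (hApos n)
    | succ M hM ih =>
        have hM0 : (0:ℝ) < (M:ℝ) := by
          have : 1 ≤ M := le_trans hn hM
          exact_mod_cast this
        have hM1 : (0:ℝ) < (M:ℝ) + 1 := by linarith
        -- expand sums
        rw [Finset.sum_Icc_succ_top (by omega : n + 1 ≤ M + 1),
          Finset.sum_Ico_succ_top (by omega : n ≤ M)]
        -- A (M+1) = A M + ((M+1) * a (M+1))^p
        have hArec : A (M + 1) = A M + (((M:ℝ) + 1) * a (M + 1)) ^ p := by
          simp only [hA]
          rw [Finset.sum_Icc_succ_top (by omega : 1 ≤ M + 1)]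
          push_cast
          ring_nf
        -- a(M+1)^p = (M+1)^(-p) * ((M+1)*a(M+1))^p
        have haM : (a (M + 1)) ^ p
            = (((M:ℝ) + 1) ^ (-p)) * ((((M:ℝ) + 1) * a (M + 1)) ^ p) := by
          have h6 : ((M:ℝ) + 1) ^ (-p) * ((M:ℝ) + 1) ^ p = 1 := by
            rw [← Real.rpow_add hM1]; simp
          rw [Real.mul_rpow hM1.le (ha _), ← mul_assoc, h6, one_mul]
        -- key inequality times A M
        have hkey := key_ineq hp (by exact_mod_cast le_trans hn hM : (1:ℝ) ≤ (M:ℝ))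
        have hkey2 : ((M:ℝ) ^ (-p) - ((M:ℝ) + 1) ^ (-p)) * A M
            ≤ p * ((M:ℝ) ^ (-(p + 1))) * A M := by
          apply mul_le_mul_of_nonneg_right _ (hApos M)
          linarith
        have hcast : ((M + 1 : ℕ) : ℝ) = (M:ℝ) + 1 := by push_cast; ring
        rw [hcast, hArec, haM]
        nlinarith [ih, hkey2, Real.rpow_nonneg (mul_nonneg hM1.le (ha (M+1))) p,
          Real.rpow_nonneg hM1.le (-p)]
  have hmain := main N (le_of_lt hnN)
  refine le_trans hmain ?_
  have hsub : ∑ ν ∈ Finset.Ico n N, ((ν : ℝ) ^ (-(p + 1))) * A ν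
      ≤ ∑ ν ∈ Finset.Icc n N, ((ν : ℝ) ^ (-(p + 1))) * A ν := by
    apply Finset.sum_le_sum_of_subset_of_nonneg
    · exact Finset.Ico_subset_Icc_self
    · intro i _ _
      exact mul_nonneg (Real.rpow_nonneg (Nat.cast_nonneg i) _) (hApos i)
  have := mul_le_mul_of_nonneg_left hsub hp0.le
  linarith
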